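/- Every tableau produced by Algorithm createTableau has the property that the target cell of every downwards pointer contains an upwards pointer; consequently, for every cell (i,j), findVertex(t(i,j)) is reached by following at most two nxt-pointers, and it is the cell holding the internal vertex identified with the j-th external vertex of the graph labeling the i-th node of the modeled derivation-tree path. -/

import Mathlib

/-! Formalization of SL HR grammars (straight-line hyperedge replacement grammars),
their derivation trees, traversal, and tableaux data structures. -/

universe u v

/-- A (hyper)graph over a label alphabet `L`: vertices and edges are natural numbers,
`att` gives the attachment sequence of an edge, `lab` its label, and `ext` is the
sequence of external vertices. -/
structure HRHypergraph (L : Type u) where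
  V : Finset ℕ
  E : Finset ℕ
  att : ℕ → List ℕ
  lab : ℕ → L
  ext : List ℕ

namespace HRHypergraph

variable {L : Type u}

/-- Well-formedness of a hypergraph with respect to a rank function on labels:
nonempty vertex set, attachments are repetition-free sequences of vertices of
length equal to the rank of the label (ranks are `≥ 1`), and the external
vertices form a repetition-free sequence of vertices. -/
def WF (rank : L → ℕ) (g : HRHypergraph L) : Prop :=
  g.V.Nonempty ∧
  (∀ e ∈ g.E, ∀ v ∈ g.att e, v ∈ g.V) ∧
  (∀ e ∈ g.E, (g.att e).Nodup) ∧
  (∀ e ∈ g.E, (g.att e).length = rank (g.lab e)) ∧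
  (∀ a : L, 1 ≤ rank a) ∧
  (∀ v ∈ g.ext, v ∈ g.V) ∧
  g.ext.Nodup

/-- The rank of a hypergraph is its number of external vertices. -/
def rank (g : HRHypergraph L) : ℕ := g.ext.length

/-- The vertex-numbered convention: a hypergraph with `n` vertices and `k` external
vertices has `V = {1,…,n}` and `ext = (n-k+1)⋯n`. -/
def VertexNumbered (g : HRHypergraph L) (n : ℕ) : Prop :=
  g.V = Finset.Icc 1 n ∧
  g.ext = (List.range g.ext.length).map (fun i => n - g.ext.length + 1 + i)

/-- A hypergraph is unique-labeled if for every vertex `x`, label `a` and position `i`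
there is at most one edge labeled `a` whose `i`-th attached vertex is `x`. -/
def UniqueLabeled (g : HRHypergraph L) : Prop :=
  ∀ (x : ℕ) (a : L) (i : ℕ), ∀ e₁ ∈ g.E, ∀ e₂ ∈ g.E,
    g.lab e₁ = a → g.lab e₂ = a →
    (g.att e₁)[i]? = some x → (g.att e₂)[i]? = some x → e₁ = e₂

/-- `x` and `y` are `a`-`k`-`l`-neighbors: some `a`-labeled edge has `x` attached
at position `k` and `y` attached at position `l` (positions are 0-based). -/
def Neighbors (g : HRHypergraph L) (a : L) (k l : ℕ) (x y : ℕ) : Prop :=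
  ∃ e ∈ g.E, g.lab e = a ∧ (g.att e)[k]? = some x ∧ (g.att e)[l]? = some y

/-- An isomorphism of hypergraphs. -/
structure Iso (g h : HRHypergraph L) where
  vmap : ℕ → ℕ
  emap : ℕ → ℕ
  vmap_bij : Set.BijOn vmap ↑g.V ↑h.V
  emap_bij : Set.BijOn emap ↑g.E ↑h.E
  att_map : ∀ e ∈ g.E, h.att (emap e) = (g.att e).map vmap
  lab_map : ∀ e ∈ g.E, h.lab (emap e) = g.lab e
  ext_map : h.ext = g.ext.map vmap

def Isomorphic (g h : HRHypergraph L) : Prop := Nonempty (Iso g h)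

/-- `res` is (an instance of) the replacement of edge `e` of `g` by (a disjoint copy of)
the graph `h`: `e` is deleted, a renamed copy of `h` is added, the `i`-th external
vertex of the copy is identified with the `i`-th attached vertex of `e`, and the
external vertices of the result are those of `g`. -/
def IsReplacement (g : HRHypergraph L) (e : ℕ) (h : HRHypergraph L) (res : HRHypergraph L) : Prop :=
  (g.att e).length = h.ext.length ∧
  ∃ (ρ : ℕ → ℕ) (η : ℕ → ℕ),
    Set.InjOn ρ ↑h.V ∧ Set.InjOn η ↑h.E ∧
    (∀ (i x : ℕ), h.ext[i]? = some x → (g.att e)[i]? = some (ρ x)) ∧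
    (∀ x ∈ h.V, x ∉ h.ext → ρ x ∉ g.V) ∧
    (∀ f ∈ h.E, η f ∉ g.E) ∧
    res.V = g.V ∪ h.V.image ρ ∧
    res.E = g.E.erase e ∪ h.E.image η ∧
    (∀ f ∈ g.E.erase e, res.att f = g.att f ∧ res.lab f = g.lab f) ∧
    (∀ f ∈ h.E, res.att (η f) = (h.att f).map ρ ∧ res.lab (η f) = h.lab f) ∧
    res.ext = g.ext

/-- The canonical vertex renaming used in vertex-numbered replacement:
the `i`-th external vertex of `h` is renamed to the `i`-th attached vertex of `e`,
every other (internal) vertex `x` of `h` is renamed to `n + x`. -/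
def renameVN (g : HRHypergraph L) (e : ℕ) (h : HRHypergraph L) (n : ℕ) (x : ℕ) : ℕ :=
  if x ∈ h.ext then (g.att e).getD (List.idxOf x h.ext) 0 else n + x

/-- A fresh edge identifier for `g`. -/
def freshE (g : HRHypergraph L) : ℕ := g.E.sup id + 1

/-- Vertex-numbered replacement `g[e/h]`, where `n` is the number of vertices of `g`:
internal vertices of the copy of `h` are renumbered consecutively from `n+1`. -/
def replaceVN (g : HRHypergraph L) (e : ℕ) (h : HRHypergraph L) (n : ℕ) : HRHypergraph L where
  V := g.V ∪ (h.V.filter (fun x => x ∉ h.ext)).image (fun x => n + x)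
  E := g.E.erase e ∪ h.E.image (fun f => freshE g + f)
  att := fun f => if f ∈ g.E.erase e then g.att f
    else (h.att (f - freshE g)).map (renameVN g e h n)
  lab := fun f => if f ∈ g.E.erase e then g.lab f else h.lab (f - freshE g)
  ext := g.ext

end HRHypergraph

/-- A hyperedge replacement grammar over terminal alphabet `σ` and nonterminal
alphabet `ν`: each symbol has a rank, each nonterminal `A` has exactly one rule
`A → rhs A`, and there is a start hypergraph. -/
structure HRG (σ : Type u) (ν : Type v) where
  rankT : σ → ℕ
  rankN : ν → ℕ
  rhs : ν → HRHypergraph (σ ⊕ ν)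
  start : HRHypergraph (σ ⊕ ν)

namespace HRG

variable {σ : Type u} {ν : Type v}

/-- The rank function on the combined label alphabet. -/
def rankL (G : HRG σ ν) : σ ⊕ ν → ℕ := Sum.elim G.rankT G.rankN

/-- The graph associated with a derivation-tree root: the start graph for `none`,
the right-hand side of `A` for `some A`. -/
def graphOf (G : HRG σ ν) : Option ν → HRHypergraph (σ ⊕ ν)
  | none => G.start
  | some A => G.rhs A

/-- The rank of a derivation-tree root (the start graph has rank 0). -/
def rankO (G : HRG σ ν) : Option ν → ℕ
  | none => 0
  | some A => G.rankN A

/-- Well-formedness of an HR grammar. -/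
def WF (G : HRG σ ν) : Prop :=
  (∀ a : σ, 1 ≤ G.rankT a) ∧ (∀ A : ν, 1 ≤ G.rankN A) ∧
  (∀ A : ν, (G.rhs A).WF G.rankL) ∧
  (∀ A : ν, (G.rhs A).ext.length = G.rankN A) ∧
  G.start.WF G.rankL ∧ G.start.ext = []

/-- `A₁ ≤_NT A₂`: some edge of `rhs A₁` is labeled by the nonterminal `A₂`. -/
def ntStep (G : HRG σ ν) (A B : ν) : Prop :=
  ∃ e ∈ (G.rhs A).E, (G.rhs A).lab e = Sum.inr B

/-- Some edge of the start graph is labeled by the nonterminal `B`. -/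
def startStep (G : HRG σ ν) (B : ν) : Prop :=
  ∃ e ∈ G.start.E, G.start.lab e = Sum.inr B

/-- Straight-line restriction: the nonterminal dependency relation is acyclic
(it admits a strictly decreasing rank into `ℕ`), and every nonterminal is
reachable from the start graph (the DAG is rooted at `S`). -/
def SL (G : HRG σ ν) : Prop :=
  (∃ d : ν → ℕ, ∀ A B : ν, G.ntStep A B → d B < d A) ∧
  (∀ B : ν, ∃ A : ν, G.startStep A ∧ Relation.ReflTransGen G.ntStep A B)

/-- One derivation step: replace some nonterminal edge by the right-hand side of
its rule. -/
def Derives (G : HRG σ ν) (g g' : HRHypergraph (σ ⊕ ν)) : Prop :=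
  ∃ e ∈ g.E, ∃ B : ν, g.lab e = Sum.inr B ∧ HRHypergraph.IsReplacement g e (G.rhs B) g'

/-- A graph all of whose edges are labeled by terminals. -/
def TerminalGraph (g : HRHypergraph (σ ⊕ ν)) : Prop :=
  ∀ e ∈ g.E, ∃ a : σ, g.lab e = Sum.inl a

/-- The language of `G`: all terminal-labeled graphs derivable from the start graph. -/
def Lang (G : HRG σ ν) : Set (HRHypergraph (σ ⊕ ν)) :=
  {g | Relation.ReflTransGen G.Derives G.start g ∧ TerminalGraph g}

/-- Lexicographic comparison of attachment sequences. -/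
def listLexLE : List ℕ → List ℕ → Bool
  | [], _ => true
  | _ :: _, [] => false
  | a :: as, b :: bs => if a < b then true else if b < a then false else listLexLE as bs

/-- The derivation order `≤_dt` on edges: lexicographic on attachment sequences,
ties broken by the fixed linear order on nonterminals. -/
def dtLE [LinearOrder ν] (g : HRHypergraph (σ ⊕ ν)) (e f : ℕ) : Bool :=
  if g.att e = g.att f then
    match g.lab e, g.lab f with
    | Sum.inr B, Sum.inr C => decide (B ≤ C)
    | _, _ => true
  else listLexLE (g.att e) (g.att f)

/-- The nonterminal edges of `g`, listed in the derivation order `≤_dt`. -/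
def ntEdgeList [LinearOrder ν] (g : HRHypergraph (σ ⊕ ν)) : List ℕ :=
  ((g.E.filter (fun e => (g.lab e).isRight = true)).sort (· ≤ ·)).mergeSort (dtLE g)

/-- Replace all nonterminal edges of `g`, in derivation order, by `val` of their
labels, using vertex-numbered replacement. -/
def expandVal (G : HRG σ ν) [LinearOrder ν] (val : ν → HRHypergraph (σ ⊕ ν))
    (g : HRHypergraph (σ ⊕ ν)) : HRHypergraph (σ ⊕ ν) :=
  (ntEdgeList g).foldl (fun acc e =>
    match acc.lab e with
    | Sum.inr B => HRHypergraph.replaceVN acc e (val B) acc.V.card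
    | Sum.inl _ => acc) g

/-- `val` is the family `(val A)_{A ∈ N}` defined by the straight-line grammar:
`val A` is obtained from `rhs A` by replacing all its nonterminal edges, in
derivation order, by the values of their labels. -/
def ValFamily (G : HRG σ ν) [LinearOrder ν] (val : ν → HRHypergraph (σ ⊕ ν)) : Prop :=
  ∀ A : ν, val A = G.expandVal val (G.rhs A)

/-- The number of internal vertices of `val A`. -/
def iNodes (val : ν → HRHypergraph (σ ⊕ ν)) (A : ν) : ℕ :=
  ((val A).V \ (val A).ext.toFinset).card

/-- The sequence of nonterminals labeling the derivation-tree nodes along the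
Dewey address `u` (children are numbered from 0 in derivation order), starting
from a root labeled by the graph `g`. `none` if the address is invalid. -/
def ntSeq (G : HRG σ ν) [LinearOrder ν] : HRHypergraph (σ ⊕ ν) → List ℕ → Option (List ν)
  | _, [] => some []
  | g, i :: u =>
    match (ntEdgeList g)[i]? with
    | some e =>
      match g.lab e with
      | Sum.inr B => (ntSeq G (G.rhs B) u).map (fun Bs => B :: Bs)
      | Sum.inl _ => none
    | none => none

/-- The graph `g_u` labeling the derivation-tree node at Dewey address `u`
(starting from a root labeled by `g`), if the address is valid. -/
def graphAt (G : HRG σ ν) [LinearOrder ν] : HRHypergraph (σ ⊕ ν) → List ℕ → Option (HRHypergraph (σ ⊕ ν))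
  | g, [] => some g
  | g, i :: u =>
    match (ntEdgeList g)[i]? with
    | some e =>
      match g.lab e with
      | Sum.inr B => graphAt G (G.rhs B) u
      | Sum.inl _ => none
    | none => none

/-- The nonterminal (or start, `none`) labeling the derivation-tree node at address
`u` in the derivation tree rooted at `root`. -/
def ntAtNode (G : HRG σ ν) [LinearOrder ν] (root : Option ν) (u : List ℕ) :
    Option (Option ν) :=
  (ntSeq G (G.graphOf root) u).map (fun Bs => (Bs.map some).getLastD root)

/-- `iN`-value of the label of edge `e` (0 for terminal labels). -/
def iNOf (iN : ν → ℕ) (g : HRHypergraph (σ ⊕ ν)) (e : ℕ) : ℕ :=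
  match g.lab e with
  | Sum.inr B => iN B
  | Sum.inl _ => 0

/-- `first(u)` relative to the derivation tree rooted at `g`, where `iN B` is the
number of internal vertices of `val B`:
`first(ε) = 0` and `first(v.i) = first(v) + |V_{g_v}| - |ext_{g_v}| + Σ_{j<i} iN(lab e_j)`. -/
def firstAux (G : HRG σ ν) [LinearOrder ν] (iN : ν → ℕ) :
    HRHypergraph (σ ⊕ ν) → List ℕ → ℕ
  | _, [] => 0
  | g, i :: u =>
    (g.V.card - g.ext.length + (((ntEdgeList g).take i).map (iNOf iN g)).sum) +
      (match (ntEdgeList g)[i]? with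
       | some e =>
         (match g.lab e with
          | Sum.inr B => firstAux G iN (G.rhs B) u
          | Sum.inl _ => 0)
       | none => 0)

/-- `TraverseRel G a k l g x u y` formalizes `traverse_{k,l}(A,x,a) = (u,y)` for the
rule with right-hand side `g`: either `g` itself contains an `a`-labeled edge with
`x` at position `k` and `y` at position `l` (then `u = ε`), or `x` is the `j`-th
attached vertex of the `i`-th nonterminal edge `e` of `g` and the traversal
continues from the `j`-th external vertex of `rhs (lab e)`. -/
inductive TraverseRel (G : HRG σ ν) [LinearOrder ν] (a : σ) (k l : ℕ) :
    HRHypergraph (σ ⊕ ν) → ℕ → List ℕ → ℕ → Prop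
  | base {g : HRHypergraph (σ ⊕ ν)} {x y e : ℕ}
      (he : e ∈ g.E) (hlab : g.lab e = Sum.inl a)
      (hk : (g.att e)[k]? = some x) (hl : (g.att e)[l]? = some y) :
      TraverseRel G a k l g x [] y
  | step {g : HRHypergraph (σ ⊕ ν)} {x i e : ℕ} {B : ν} {j z : ℕ} {v : List ℕ} {y : ℕ}
      (hi : (ntEdgeList g)[i]? = some e) (hB : g.lab e = Sum.inr B)
      (hx : (g.att e)[j]? = some x) (hz : (G.rhs B).ext[j]? = some z)
      (hrec : TraverseRel G a k l (G.rhs B) z v y) :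
      TraverseRel G a k l g x (i :: v) y

/-- `InternalRel G g0 u x v y` formalizes `internal(u,x) = (v,y)` in the derivation
tree rooted at `g0`: the vertex `x` of `g_u` is identified, through the chain of
external-vertex identifications of the derivation, with the internal vertex `y`
of `g_v` at the ancestor `v` of `u`. -/
inductive InternalRel (G : HRG σ ν) [LinearOrder ν] (g0 : HRHypergraph (σ ⊕ ν)) :
    List ℕ → ℕ → List ℕ → ℕ → Prop
  | refl {u : List ℕ} {x : ℕ} {g : HRHypergraph (σ ⊕ ν)}
      (hg : graphAt G g0 u = some g) (hx : x ∈ g.V) (hint : x ∉ g.ext) :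
      InternalRel G g0 u x u x
  | up {u : List ℕ} {i x j : ℕ} {g gc : HRHypergraph (σ ⊕ ν)} {e y : ℕ} {v : List ℕ} {z : ℕ}
      (hg : graphAt G g0 u = some g)
      (he : (ntEdgeList g)[i]? = some e)
      (hgc : graphAt G g0 (u ++ [i]) = some gc)
      (hx : gc.ext[j]? = some x) (hy : (g.att e)[j]? = some y)
      (hrec : InternalRel G g0 u y v z) :
      InternalRel G g0 (u ++ [i]) x v z

end HRG

/-- A tableau: a matrix of cells (each holding a pointer `nxt` and a vertex number
`vtx`), together with the column vectors `nt` and `first` and an offset.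
Rows and columns are 0-based; `nt i = none` denotes the start graph. -/
structure Tableau (ν : Type v) where
  rows : ℕ
  cols : ℕ
  nxt : ℕ → ℕ → Option (ℕ × ℕ)
  vtx : ℕ → ℕ → ℕ
  nt : ℕ → Option ν
  first : ℕ → ℕ
  off : ℕ

namespace Tableau

variable {ν : Type v}

/-- Following the `nxt` pointer of cell `(i,j)`, and one more pointer if the first
one is downwards (targets a row strictly below `i`). -/
def findVertex (t : Tableau ν) (i j : ℕ) : Option (ℕ × ℕ) :=
  match t.nxt i j with
  | none => none
  | some (i', j') => if i' ≤ i then some (i', j') else t.nxt i' j'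

/-- The cell of `t` redirected by `concat` for column `j`: the target of the
downwards pointer of the first-row cell `(0,j)`, if that pointer is downwards,
and `(0,j)` itself otherwise. -/
def downTarget (t : Tableau ν) (j : ℕ) : ℕ × ℕ :=
  match t.nxt 0 j with
  | some (i', j') => if 0 < i' then (i', j') else (0, j)
  | none => (0, j)

end Tableau

namespace HRG

variable {σ : Type u} {ν : Type v}

/-- The first `m` rows of the tableau `t` model the path from the root (labeled by
`graphOf root`) to the node `u` (with `m = |u| + 1`) of the derivation tree:
rows carry the correct nonterminals and (offset-adjusted) `first` values, and for
every external vertex of every row graph, `findVertex` reaches, in at most two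
pointer steps, the cell holding the internal vertex it is identified with
(a first-row cell with `vtx = 0` if no such vertex exists), and a pointer is
upwards iff no lower row shares its `findVertex` value. -/
def ModelsUpTo (G : HRG σ ν) [LinearOrder ν] (iN : ν → ℕ) (root : Option ν)
    (u : List ℕ) (t : Tableau ν) (m : ℕ) : Prop :=
  ∃ Bs : List ν, ntSeq G (G.graphOf root) u = some Bs ∧
    m = u.length + 1 ∧ m ≤ t.rows ∧
    (∀ i < m, t.nt i = (root :: Bs.map some).getD i root) ∧
    (∀ i < m, t.first i + t.off = firstAux G iN (G.graphOf root) (u.take i)) ∧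
    (∀ i < m, ∀ gi, graphAt G (G.graphOf root) (u.take i) = some gi →
      ∀ j y, gi.ext[j]? = some y →
        (∀ v z, InternalRel G (G.graphOf root) (u.take i) y v z →
          ∃ j', t.findVertex i j = some (v.length, j') ∧ t.vtx v.length j' = z) ∧
        ((¬ ∃ v z, InternalRel G (G.graphOf root) (u.take i) y v z) →
          ∃ j', t.findVertex i j = some (0, j') ∧ t.vtx 0 j' = 0) ∧
        ((∀ p ∈ t.nxt i j, p.1 ≤ i) ↔
          ¬ ∃ i' j', i < i' ∧ i' < m ∧ j' < t.cols ∧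
            t.findVertex i' j' = t.findVertex i j))

/-- The tableau `t` models the path from the root to the node `u` of the derivation
tree rooted at `graphOf root` (Definition of `tab(u)`): in addition to
`ModelsUpTo` for all rows, it has exactly `|u| + 1` rows, offset `0`, and all
out-of-range entries are `0`. -/
def Models (G : HRG σ ν) [LinearOrder ν] (iN : ν → ℕ) (root : Option ν)
    (u : List ℕ) (t : Tableau ν) : Prop :=
  ModelsUpTo G iN root u t (u.length + 1) ∧
  t.rows = u.length + 1 ∧ t.off = 0 ∧
  (∀ i j : ℕ, t.rows ≤ i ∨ t.cols ≤ j → t.nxt i j = none ∧ t.vtx i j = 0)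

/-- The one-row tableau `t_ε` for the root of the derivation tree of `root`:
every column `j < rank root` holds a self-loop (upwards) pointer, all other
entries are `0`. -/
def initTab (G : HRG σ ν) (root : Option ν) (κ : ℕ) : Tableau ν where
  rows := 1
  cols := κ
  nxt := fun a b => if a = 0 ∧ b < G.rankO root then some (0, b) else none
  vtx := fun _ _ => 0
  nt := fun _ => root
  first := fun _ => 0
  off := 0

/-- One step of Algorithm `createTableau`: extend the tableau `t`, which models a
path ending in a node labeled by nonterminal `B = nt (rows - 1)`, by a new bottom
row for the `l`-th child (the `l`-th nonterminal edge `e_l` of `rhs B`): for each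
`j < rank e_l`, with `x = att(e_l)[j]`, if `x` is internal then the new cell points
to the cell above which receives `vtx = x`; if `x` is the `j'`-th external vertex
of `rhs B` then the new cell takes over the pointer of cell `(rows-1, j')`, which
in turn points down to the new cell, and all pointers from higher rows targeting
`(rows-1, j')` are redirected to the new cell. -/
def extendTab (G : HRG σ ν) [LinearOrder ν] (iN : ν → ℕ) (t : Tableau ν) (l : ℕ) :
    Tableau ν :=
  let m := t.rows
  let g := G.graphOf (t.nt (m - 1))
  let es := ntEdgeList g
  let e := es.getD l 0
  let al := g.att e
  let isExtCol : ℕ → Bool := fun c =>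
    match g.ext[c]? with
    | some x => decide (x ∈ al)
    | none => false
  let newColOf : ℕ → ℕ := fun c =>
    match g.ext[c]? with
    | some x => List.idxOf x al
    | none => 0
  { rows := m + 1
    cols := t.cols
    nt := fun i => if i = m then
        (match g.lab e with
         | Sum.inr B => some B
         | Sum.inl _ => none)
      else t.nt i
    first := fun i => if i = m then
        t.first (m - 1) + g.V.card - g.ext.length + ((es.take l).map (iNOf iN g)).sum
      else t.first i
    off := t.off
    vtx := fun i j =>
      if i = m then 0
      else if i = m - 1 ∧ j < al.length ∧ al.getD j 0 ∉ g.ext then al.getD j 0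
      else t.vtx i j
    nxt := fun i j =>
      if i = m then
        (if j < al.length then
          (if al.getD j 0 ∈ g.ext then t.nxt (m - 1) (List.idxOf (al.getD j 0) g.ext)
           else some (m - 1, j))
         else none)
      else if i = m - 1 then
        (if isExtCol j then some (m, newColOf j) else t.nxt i j)
      else
        (match t.nxt i j with
         | some (i', c) => if i' = m - 1 ∧ isExtCol c then some (m, newColOf c) else some (i', c)
         | none => none) }

/-- Algorithm `createTableau`: the tableau for the node at address `u` of the
derivation tree rooted at `graphOf root`, built by starting from `initTab` and
extending one row per step along the path. -/
def createTableau (G : HRG σ ν) [LinearOrder ν] (iN : ν → ℕ) (κ : ℕ)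
    (root : Option ν) (u : List ℕ) : Tableau ν :=
  u.foldl (extendTab G iN) (initTab G root κ)

open Classical in
/-- Algorithm `concat` (as the resulting virtual tableau): concatenate `t₂`
(modeling a path in the derivation tree of the nonterminal at row `r` of `t₁`)
to row `r` of `t₁`; `kB` is the rank of that nonterminal. Rows `< r` are those
of `t₁`; rows `≥ r` come from `t₂`, with, for each column `j < kB`, the relevant
upwards pointer of `t₂` redirected to `findVertex(t₁(r,j))`, and with the
offset of `t₂` set to `t₁.off + t₁.first r`. -/
noncomputable def concatTab (t₂ t₁ : Tableau ν) (r kB : ℕ) : Tableau ν where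
  rows := r + t₂.rows
  cols := t₁.cols
  nt := fun i => if i < r then t₁.nt i else t₂.nt (i - r)
  first := fun i => if i < r then t₁.first i + t₁.off
    else t₂.first (i - r) + (t₁.off + t₁.first r)
  off := 0
  vtx := fun i j => if i < r then t₁.vtx i j else t₂.vtx (i - r) j
  nxt := fun i j =>
    if i < r then t₁.nxt i j
    else if h : ∃ j0, j0 < kB ∧ Tableau.downTarget t₂ j0 = (i - r, j) then
      t₁.findVertex r h.choose
    else (t₂.nxt (i - r) j).map (fun p => (p.1 + r, p.2))

end HRG

/-- The string graph with `N` consecutive `a`-labeled edges: vertices `1,…,N+1`,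
the `i`-th edge attached to `(i, i+1)`. -/
def pathGraph {L : Type u} (N : ℕ) (a : L) : HRHypergraph L where
  V := Finset.Icc 1 (N + 1)
  E := Finset.Icc 1 N
  att := fun e => [e, e + 1]
  lab := fun _ => a
  ext := []

/-- The star grammar `G_n` of Figure `starGrammar1`: terminal alphabet `{a}` of rank 2,
nonterminals `A_0, …, A_{n-1}` of rank 2; the start graph has vertices `{1,2,3}` and
two `A_0`-edges attached to `(1,2)` and `(1,3)`; `rhs A_i` has vertices `{1,2,3}`,
external vertices `(2,3)`, and two edges labeled `A_{i+1}` (labeled `a` for `i = n-1`)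
attached to `(2,3)` and `(2,1)`. -/
def starG (n : ℕ) : HRG Unit (Fin n) where
  rankT := fun _ => 2
  rankN := fun _ => 2
  rhs := fun i =>
    { V := {1, 2, 3}
      E := {1, 2}
      att := fun e => if e = 1 then [2, 3] else [2, 1]
      lab := fun _ => if h : i.val + 1 < n then Sum.inr ⟨i.val + 1, h⟩ else Sum.inl ()
      ext := [2, 3] }
  start :=
    { V := {1, 2, 3}
      E := {1, 2}
      att := fun e => if e = 1 then [1, 2] else [1, 3]
      lab := fun _ => if h : 0 < n then Sum.inr ⟨0, h⟩ else Sum.inl ()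
      ext := [] }

section Aux

open HRHypergraph HRG

namespace StmtAux

variable {σ ν : Type} [LinearOrder ν] {G : HRG σ ν}

/-- `InternalRel` output node is a prefix of the input node. -/
lemma internalRel_prefix {g0 : HRHypergraph (σ ⊕ ν)} {w : List ℕ} {y : ℕ} {v : List ℕ} {z : ℕ}
    (h : InternalRel G g0 w y v z) : v <+: w := by
  induction h with
  | refl => exact List.prefix_refl _
  | up _ _ _ _ _ _ ih => exact ih.trans (List.prefix_append _ _)

lemma mem_ntEdgeList {g : HRHypergraph (σ ⊕ ν)} {e : ℕ} (h : e ∈ ntEdgeList g) :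
    e ∈ g.E := by
  unfold ntEdgeList at h
  rw [List.mem_mergeSort, Finset.mem_sort] at h
  exact (Finset.mem_filter.mp h).1

/-- Unpack one step of `ntSeq` validity at the end of the path. -/
lemma step_facts {g : HRHypergraph (σ ⊕ ν)} {u : List ℕ} {l : ℕ} {Bs : List ν}
    (h : ntSeq G g (u ++ [l]) = some Bs) :
    (∃ Bs', ntSeq G g u = some Bs') ∧
      ∃ gu, graphAt G g u = some gu ∧
        ∃ e B, (ntEdgeList gu)[l]? = some e ∧ gu.lab e = Sum.inr B ∧
          graphAt G g (u ++ [l]) = some (G.rhs B) := by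
  induction u generalizing g Bs with
  | nil =>
    simp only [List.nil_append, ntSeq] at h
    split at h
    · rename_i e hE
      split at h
      · rename_i B hL
        refine ⟨⟨[], rfl⟩, g, rfl, e, B, hE, hL, ?_⟩
        simp only [List.nil_append, graphAt, hE, hL]
      · exact absurd h (by simp)
    · exact absurd h (by simp)
  | cons i u ih =>
    rw [List.cons_append] at h
    simp only [ntSeq] at h
    split at h
    · rename_i e hE
      split at h
      · rename_i B hL
        rw [Option.map_eq_some_iff] at h
        obtain ⟨Bs', hBs', rfl⟩ := h
        obtain ⟨⟨Cs, hCs⟩, gu, hgu, rest⟩ := ih hBs'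
        refine ⟨⟨B :: Cs, ?_⟩, gu, ?_, ?_⟩
        · simp only [ntSeq, hE, hL, hCs, Option.map_some]
        · simp only [graphAt, hE, hL]; exact hgu
        · obtain ⟨e', B', h1, h2, h3⟩ := rest
          refine ⟨e', B', h1, h2, ?_⟩
          rw [List.cons_append]
          simp only [graphAt, hE, hL]
          exact h3
      · exact absurd h (by simp)
    · exact absurd h (by simp)

/-- Any graph reached by `graphAt` is the root graph or a right-hand side. -/
lemma graphAt_shape {g : HRHypergraph (σ ⊕ ν)} {u : List ℕ} {h : HRHypergraph (σ ⊕ ν)}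
    (hh : graphAt G g u = some h) : h = g ∨ ∃ B, h = G.rhs B := by
  induction u generalizing g with
  | nil =>
    simp only [graphAt, Option.some_inj] at hh
    exact Or.inl hh.symm
  | cons i u ih =>
    simp only [graphAt] at hh
    split at hh
    · rename_i e hE
      split at hh
      · rename_i B hL
        rcases ih hh with h1 | h2
        · exact Or.inr ⟨B, h1⟩
        · exact Or.inr h2
      · exact absurd hh (by simp)
    · exact absurd hh (by simp)

lemma graphAt_wf (hWF : G.WF) {root : Option ν} {u : List ℕ} {g : HRHypergraph (σ ⊕ ν)}
    (h : graphAt G (G.graphOf root) u = some g) : g.WF G.rankL := by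
  rcases graphAt_shape h with rfl | ⟨B, rfl⟩
  · cases root with
    | none => exact hWF.2.2.2.2.1
    | some A => exact hWF.2.2.1 A
  · exact hWF.2.2.1 _

/-- `ext.length` of the graph of a root equals `rankO`. -/
lemma ext_len_graphOf (hWF : G.WF) (root : Option ν) :
    (G.graphOf root).ext.length = G.rankO root := by
  cases root with
  | none => simp [HRG.graphOf, HRG.rankO, hWF.2.2.2.2.2]
  | some A => exact hWF.2.2.2.1 A

/-- The graph labeling the last row of a tableau. -/
def gOf (G : HRG σ ν) (t : Tableau ν) : HRHypergraph (σ ⊕ ν) :=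
  G.graphOf (t.nt (t.rows - 1))

/-- The attachment list of the `l`-th nonterminal edge used by `extendTab`. -/
def alOf (G : HRG σ ν) (t : Tableau ν) (l : ℕ) : List ℕ :=
  (gOf G t).att ((ntEdgeList (gOf G t)).getD l 0)

section ExtendTab

variable (G : HRG σ ν) (iN : ν → ℕ) (t : Tableau ν) (l : ℕ)

lemma ext_rows : (extendTab G iN t l).rows = t.rows + 1 := rfl

lemma ext_off : (extendTab G iN t l).off = t.off := rfl

lemma ext_nt_new {B : ν} (hL : (gOf G t).lab ((ntEdgeList (gOf G t)).getD l 0) = Sum.inr B) :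
    (extendTab G iN t l).nt t.rows = some B := by
  simp only [extendTab, gOf] at hL ⊢
  rw [if_pos trivial, hL]

lemma ext_nt_old {i : ℕ} (hi : i ≠ t.rows) : (extendTab G iN t l).nt i = t.nt i := by
  simp only [extendTab]
  rw [if_neg hi]

lemma ext_nxt_new_ext {j : ℕ} (hj : j < (alOf G t l).length)
    (hmem : (alOf G t l).getD j 0 ∈ (gOf G t).ext) :
    (extendTab G iN t l).nxt t.rows j =
      t.nxt (t.rows - 1) (List.idxOf ((alOf G t l).getD j 0) (gOf G t).ext) := by
  simp only [extendTab, gOf, alOf, List.getD_eq_getElem?_getD] at *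
  rw [if_pos trivial, if_pos hj, if_pos hmem]

lemma ext_nxt_new_int {j : ℕ} (hj : j < (alOf G t l).length)
    (hmem : (alOf G t l).getD j 0 ∉ (gOf G t).ext) :
    (extendTab G iN t l).nxt t.rows j = some (t.rows - 1, j) := by
  simp only [extendTab, gOf, alOf, List.getD_eq_getElem?_getD] at *
  rw [if_pos trivial, if_pos hj, if_neg hmem]

lemma ext_nxt_new_none {j : ℕ} (hj : ¬ j < (alOf G t l).length) :
    (extendTab G iN t l).nxt t.rows j = none := by
  simp only [extendTab, gOf, alOf, List.getD_eq_getElem?_getD] at *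
  rw [if_pos trivial, if_neg hj]

lemma ext_nxt_last_ext (hm : 1 ≤ t.rows) {j x : ℕ} (hx : (gOf G t).ext[j]? = some x)
    (hmem : x ∈ alOf G t l) :
    (extendTab G iN t l).nxt (t.rows - 1) j = some (t.rows, List.idxOf x (alOf G t l)) := by
  simp only [extendTab, gOf, alOf, List.getD_eq_getElem?_getD] at *
  rw [if_neg (by omega), if_pos trivial, if_pos (by simp [hx, hmem]), hx]

lemma ext_nxt_last_other (hm : 1 ≤ t.rows) {j : ℕ}
    (hcond : ∀ x, (gOf G t).ext[j]? = some x → x ∉ alOf G t l) :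
    (extendTab G iN t l).nxt (t.rows - 1) j = t.nxt (t.rows - 1) j := by
  simp only [extendTab, gOf, alOf, List.getD_eq_getElem?_getD] at *
  rw [if_neg (by omega), if_pos trivial, if_neg ?_]
  cases hx : (G.graphOf (t.nt (t.rows - 1))).ext[j]? with
  | none => simp [hx]
  | some x => simp [hx, hcond x hx]

lemma ext_nxt_old_none {i j : ℕ} (hi : i < t.rows - 1) (hn : t.nxt i j = none) :
    (extendTab G iN t l).nxt i j = none := by
  simp only [extendTab]
  rw [if_neg (by omega), if_neg (by omega), hn]

lemma ext_nxt_old_keep {i j a b : ℕ} (hi : i < t.rows - 1) (hn : t.nxt i j = some (a, b))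
    (ha : a ≠ t.rows - 1) :
    (extendTab G iN t l).nxt i j = some (a, b) := by
  simp only [extendTab]
  rw [if_neg (by omega), if_neg (by omega), hn]
  simp [ha]

lemma ext_nxt_old_keep' {i j b : ℕ} (hi : i < t.rows - 1)
    (hn : t.nxt i j = some (t.rows - 1, b))
    (hcond : ∀ x, (gOf G t).ext[b]? = some x → x ∉ alOf G t l) :
    (extendTab G iN t l).nxt i j = some (t.rows - 1, b) := by
  simp only [extendTab, gOf, alOf, List.getD_eq_getElem?_getD] at *
  rw [if_neg (by omega), if_neg (by omega), hn]
  cases hx : (G.graphOf (t.nt (t.rows - 1))).ext[b]? with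
  | none => simp [hx]
  | some x => simp [hx, hcond x hx]

lemma ext_nxt_old_redir {i j b x : ℕ} (hi : i < t.rows - 1)
    (hn : t.nxt i j = some (t.rows - 1, b))
    (hx : (gOf G t).ext[b]? = some x) (hmem : x ∈ alOf G t l) :
    (extendTab G iN t l).nxt i j = some (t.rows, List.idxOf x (alOf G t l)) := by
  simp only [extendTab, gOf, alOf, List.getD_eq_getElem?_getD] at *
  rw [if_neg (by omega), if_neg (by omega), hn]
  simp [hx, hmem]

lemma ext_nxt_high {i j : ℕ} (hi : t.rows < i) (hn : t.nxt i j = none) :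
    (extendTab G iN t l).nxt i j = none := by
  simp only [extendTab]
  rw [if_neg (by omega), if_neg (by omega), hn]

lemma ext_vtx_new (j : ℕ) : (extendTab G iN t l).vtx t.rows j = 0 := by
  simp only [extendTab]
  rw [if_pos trivial]

lemma ext_vtx_last_int (hm : 1 ≤ t.rows) {j : ℕ} (hj : j < (alOf G t l).length)
    (hmem : (alOf G t l).getD j 0 ∉ (gOf G t).ext) :
    (extendTab G iN t l).vtx (t.rows - 1) j = (alOf G t l).getD j 0 := by
  simp only [extendTab, gOf, alOf, List.getD_eq_getElem?_getD] at *
  rw [if_neg (by omega), if_pos ⟨trivial, hj, hmem⟩]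

lemma ext_vtx_old {i j : ℕ} (hi : i < t.rows - 1) :
    (extendTab G iN t l).vtx i j = t.vtx i j := by
  simp only [extendTab]
  rw [if_neg (by omega), if_neg (by push_neg; intro h; omega)]

end ExtendTab

section FindVertex

variable {ν : Type} (t : Tableau ν)

lemma fv_up {i j a b : ℕ} (hn : t.nxt i j = some (a, b)) (ha : a ≤ i) :
    t.findVertex i j = some (a, b) := by
  simp only [Tableau.findVertex, hn, if_pos ha]

lemma fv_down {i j a b : ℕ} (hn : t.nxt i j = some (a, b)) (ha : i < a) :
    t.findVertex i j = t.nxt a b := by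
  simp only [Tableau.findVertex, hn]
  rw [if_neg (Nat.not_le.mpr ha)]

end FindVertex

/-- An external vertex can only be `InternalRel`-related at a node that has a parent. -/
lemma internalRel_ext_parent {g0 : HRHypergraph (σ ⊕ ν)} {w : List ℕ} {y v : List ℕ → List ℕ} :
    True := trivial

lemma internalRel_of_ext {g0 gw : HRHypergraph (σ ⊕ ν)} {w : List ℕ} {y : ℕ} {v : List ℕ} {z : ℕ}
    (h : InternalRel G g0 w y v z) (hw : graphAt G g0 w = some gw) (hy : y ∈ gw.ext) :
    ∃ w' i0, w = w' ++ [i0] := by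
  cases h with
  | refl hg hx hint =>
    rw [hw] at hg
    injection hg with hg
    exact absurd (hg ▸ hy) hint
  | up hg he hgc hx hy' hrec => exact ⟨_, _, rfl⟩

/-- Inversion of `InternalRel` at a node `u ++ [l]` for an external vertex. -/
lemma internalRel_concat_inv {g0 g gc : HRHypergraph (σ ⊕ ν)} {u : List ℕ} {l : ℕ}
    {e j y : ℕ} {v : List ℕ} {z : ℕ}
    (h : InternalRel G g0 (u ++ [l]) y v z)
    (hu : graphAt G g0 u = some g) (he : (ntEdgeList g)[l]? = some e)
    (hgc : graphAt G g0 (u ++ [l]) = some gc)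
    (hnd : gc.ext.Nodup) (hj : gc.ext[j]? = some y) :
    ∃ x, (g.att e)[j]? = some x ∧ InternalRel G g0 u x v z := by
  generalize hww : u ++ [l] = w at h
  cases h with
  | refl hg hx hint =>
    subst hww
    rw [hgc] at hg
    injection hg with hg
    subst hg
    obtain ⟨hjl, rfl⟩ := List.getElem?_eq_some_iff.mp hj
    exact absurd (List.getElem_mem hjl) hint
  | up hg he' hgc' hx hy' hrec =>
    obtain ⟨rfl, hil⟩ := List.append_inj' hww.symm rfl
    injection hil with hil
    subst hil
    rw [hu] at hg; injection hg with hg; subst hg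
    rw [he] at he'; injection he' with he'; subst he'
    rw [hgc] at hgc'; injection hgc' with hgc'; subst hgc'
    -- hx : gc.ext[j✝]? = some y, hj : gc.ext[j]? = some y; nodup gives equal indices
    obtain ⟨h1, h2⟩ := List.getElem?_eq_some_iff.mp hj
    obtain ⟨h3, h4⟩ := List.getElem?_eq_some_iff.mp hx
    have e1 := List.Nodup.idxOf_getElem hnd j h1
    have e2 := List.Nodup.idxOf_getElem hnd _ h3
    rw [h2] at e1
    rw [h4] at e2
    have hj2 := e1.symm.trans e2
    subst hj2
    exact ⟨_, hy', hrec⟩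

/-- For an external vertex, the internal representative lives strictly above. -/
lemma internalRel_ext_lt {g0 gw : HRHypergraph (σ ⊕ ν)} {w : List ℕ} {y : ℕ} {v : List ℕ} {z : ℕ}
    (h : InternalRel G g0 w y v z) (hw : graphAt G g0 w = some gw) (hy : y ∈ gw.ext) :
    v.length < w.length := by
  cases h with
  | refl hg hx hint =>
    rw [hw] at hg
    injection hg with hg
    exact absurd (hg ▸ hy) hint
  | up hg he hgc hx hy' hrec =>
    have := (internalRel_prefix hrec).length_le
    simp only [List.length_append, List.length_cons, List.length_nil]
    omega

/-- Inversion for an internal vertex: the relation must be reflexive. -/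
lemma internalRel_int_inv {g0 gw : HRHypergraph (σ ⊕ ν)} {w : List ℕ} {y : ℕ} {v : List ℕ} {z : ℕ}
    (h : InternalRel G g0 w y v z) (hw : graphAt G g0 w = some gw) (hy : y ∉ gw.ext) :
    v = w ∧ z = y := by
  cases h with
  | refl hg hx hint => exact ⟨rfl, rfl⟩
  | up hg he hgc hx hy' hrec =>
    rw [hw] at hgc
    injection hgc with hgc
    subst hgc
    obtain ⟨h1, rfl⟩ := List.getElem?_eq_some_iff.mp hx
    exact absurd (List.getElem_mem h1) hy

/-- The invariant maintained by `createTableau` along a valid derivation-tree path. -/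
structure Inv (G : HRG σ ν) (root : Option ν) (u : List ℕ) (t : Tableau ν) : Prop where
  rows_eq : t.rows = u.length + 1
  none_high : ∀ i j, t.rows ≤ i → t.nxt i j = none
  inside : ∀ i j p, t.nxt i j = some p → p.1 < t.rows
  down_up : ∀ i j i' j', t.nxt i j = some (i', j') → i < i' →
    ∃ a b, t.nxt i' j' = some (a, b) ∧ a ≤ i'
  last_some : ∀ j, j < (G.graphOf (t.nt (t.rows - 1))).ext.length →
    ∃ a b, t.nxt (t.rows - 1) j = some (a, b) ∧
      (a < t.rows - 1 ∨ (a = t.rows - 1 ∧ b = j))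
  last_none : ∀ j, (G.graphOf (t.nt (t.rows - 1))).ext.length ≤ j →
    t.nxt (t.rows - 1) j = none
  last_graph : graphAt G (G.graphOf root) u = some (G.graphOf (t.nt (t.rows - 1)))
  find_correct : ∀ i, i < t.rows → ∀ gi, graphAt G (G.graphOf root) (u.take i) = some gi →
    ∀ j y, gi.ext[j]? = some y → ∀ v z, InternalRel G (G.graphOf root) (u.take i) y v z →
      ∃ j', t.findVertex i j = some (v.length, j') ∧ t.vtx v.length j' = z

lemma inv_init (hWF : G.WF) (root : Option ν) (κ : ℕ) :
    Inv G root [] (initTab G root κ) := by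
  have hrk : (G.graphOf root).ext.length = G.rankO root := ext_len_graphOf hWF root
  constructor
  · rfl
  · intro i j hi
    simp only [initTab]
    rw [if_neg (by rintro ⟨rfl, -⟩; exact absurd hi (by simp [initTab]))]
  · intro i j p hp
    simp only [initTab] at hp
    split at hp
    · injection hp with hp; subst hp; rename_i hc; simp [initTab, hc.1]
    · exact absurd hp (by simp)
  · intro i j i' j' hp hlt
    simp only [initTab] at hp
    split at hp
    · rename_i hc
      injection hp with hp
      rw [Prod.mk.injEq] at hp
      exfalso
      omega
    · exact absurd hp (by simp)
  · intro j hj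
    refine ⟨0, j, ?_, Or.inr ⟨rfl, rfl⟩⟩
    show (initTab G root κ).nxt 0 j = some (0, j)
    have h0 : (G.graphOf ((initTab G root κ).nt ((initTab G root κ).rows - 1))).ext.length
        = G.rankO root := hrk
    rw [h0] at hj
    simp only [initTab]
    rw [if_pos ⟨trivial, by omega⟩]
  · intro j hj
    have h0 : (G.graphOf ((initTab G root κ).nt ((initTab G root κ).rows - 1))).ext.length
        = G.rankO root := hrk
    rw [h0] at hj
    simp only [initTab]
    rw [if_neg (by rintro ⟨-, h⟩; omega)]
  · show graphAt G (G.graphOf root) [] = some (G.graphOf root)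
    rfl
  · intro i hi gi hgi j y hy v z hrel
    have hr1 : (initTab G root κ).rows = 1 := rfl
    rw [hr1] at hi
    obtain rfl : i = 0 := by omega
    simp only [List.take_nil, graphAt, Option.some_inj] at hgi
    subst hgi
    obtain ⟨w', i0, hw⟩ := internalRel_of_ext hrel rfl
      (by obtain ⟨h1, rfl⟩ := List.getElem?_eq_some_iff.mp hy; exact List.getElem_mem h1)
    exact absurd hw (by simp)

lemma inv_step (hWF : G.WF) {root : Option ν} {u : List ℕ} {l : ℕ} {Bs : List ν}
    (iN : ν → ℕ) {t : Tableau ν}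
    (hseq : ntSeq G (G.graphOf root) (u ++ [l]) = some Bs)
    (hI : Inv G root u t) :
    Inv G root (u ++ [l]) (extendTab G iN t l) := by
  obtain ⟨⟨Bs', hBs'⟩, gu, hgu, e0, B, hE, hL, hgc⟩ := step_facts hseq
  have hgu' : graphAt G (G.graphOf root) u = some (gOf G t) := hI.last_graph
  rw [hgu'] at hgu
  injection hgu with hgu
  subst hgu
  have hm : t.rows = u.length + 1 := hI.rows_eq
  have hm1 : 1 ≤ t.rows := by omega
  have he0d : (ntEdgeList (gOf G t)).getD l 0 = e0 := by
    rw [List.getD_eq_getElem?_getD, hE]; rfl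
  have hale : alOf G t l = (gOf G t).att e0 := by rw [alOf, he0d]
  have hWFg : (gOf G t).WF G.rankL := graphAt_wf hWF hgu'
  have hWFB : (G.rhs B).WF G.rankL := hWF.2.2.1 B
  have he0E : e0 ∈ (gOf G t).E := by
    obtain ⟨h1, rfl⟩ := List.getElem?_eq_some_iff.mp hE
    exact mem_ntEdgeList (List.getElem_mem h1)
  have hndg : (gOf G t).ext.Nodup := hWFg.2.2.2.2.2.2
  have hndB : (G.rhs B).ext.Nodup := hWFB.2.2.2.2.2.2
  have hal_len : (alOf G t l).length = (G.rhs B).ext.length := by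
    rw [hale, hWFg.2.2.2.1 e0 he0E, hL, hWF.2.2.2.1 B]
    rfl
  have hLd : (gOf G t).lab ((ntEdgeList (gOf G t)).getD l 0) = Sum.inr B := by
    rw [he0d]; exact hL
  have hntB : (extendTab G iN t l).nt t.rows = some B := ext_nt_new G iN t l hLd
  -- the new last-row graph is `rhs B`
  have hrowsE : (extendTab G iN t l).rows = t.rows + 1 := ext_rows G iN t l
  have hlastg : G.graphOf ((extendTab G iN t l).nt ((extendTab G iN t l).rows - 1))
      = G.rhs B := by
    rw [hrowsE, Nat.add_sub_cancel, hntB]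
    rfl
  -- index-of round trips
  have hidx_ext : ∀ {c x : ℕ}, (gOf G t).ext[c]? = some x →
      List.idxOf x (gOf G t).ext = c := by
    intro c x hc
    obtain ⟨h1, rfl⟩ := List.getElem?_eq_some_iff.mp hc
    exact List.Nodup.idxOf_getElem hndg c h1
  have hnew_of_ext : ∀ {c x : ℕ}, (gOf G t).ext[c]? = some x → x ∈ alOf G t l →
      (extendTab G iN t l).nxt t.rows (List.idxOf x (alOf G t l))
        = t.nxt (t.rows - 1) c := by
    intro c x hx hmem
    have hidxlt : List.idxOf x (alOf G t l) < (alOf G t l).length :=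
      List.idxOf_lt_length_iff.mpr hmem
    have hgetD : (alOf G t l).getD (List.idxOf x (alOf G t l)) 0 = x := by
      rw [List.getD_eq_getElem?_getD, List.getElem?_eq_getElem hidxlt,
        List.getElem_idxOf hidxlt]
      rfl
    have hxe : x ∈ (gOf G t).ext := by
      obtain ⟨h1, rfl⟩ := List.getElem?_eq_some_iff.mp hx
      exact List.getElem_mem h1
    rw [ext_nxt_new_ext G iN t l hidxlt (by rw [hgetD]; exact hxe), hgetD, hidx_ext hx]
  have hlast_pt : ∀ c, c < (gOf G t).ext.length →
      ∃ a b, t.nxt (t.rows - 1) c = some (a, b) ∧ a ≤ t.rows - 1 := by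
    intro c hc
    obtain ⟨a, b, hab, hsh⟩ := hI.last_some c hc
    exact ⟨a, b, hab, by omega⟩
  constructor
  -- rows_eq
  · rw [hrowsE, hm]
    simp
  -- none_high
  · intro i j hi
    rw [hrowsE] at hi
    exact ext_nxt_high G iN t l (by omega) (hI.none_high i j (by omega))
  -- inside
  · intro i j p hp
    rw [hrowsE]
    rcases Nat.lt_trichotomy i t.rows with hi | rfl | hi
    · rcases Nat.lt_or_ge i (t.rows - 1) with hi1 | hi1
      · -- old rows
        cases hab : t.nxt i j with
        | none => rw [ext_nxt_old_none G iN t l hi1 hab] at hp; exact absurd hp (by simp)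
        | some ab =>
          obtain ⟨a, b⟩ := ab
          by_cases ha : a = t.rows - 1
          · subst ha
            cases hx : (gOf G t).ext[b]? with
            | none =>
              rw [ext_nxt_old_keep' G iN t l hi1 hab
                (by intro x hx'; rw [hx] at hx'; exact absurd hx' (by simp))] at hp
              injection hp with hp; subst hp; omega
            | some x =>
              by_cases hmem : x ∈ alOf G t l
              · rw [ext_nxt_old_redir G iN t l hi1 hab hx hmem] at hp
                injection hp with hp; subst hp; simp
              · rw [ext_nxt_old_keep' G iN t l hi1 hab
                  (by intro x' hx'; rw [hx] at hx'; injection hx' with hx'; subst hx';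
                      exact hmem)] at hp
                injection hp with hp; subst hp; omega
          · rw [ext_nxt_old_keep G iN t l hi1 hab ha] at hp
            injection hp with hp; subst hp
            have := hI.inside i j (a, b) hab
            omega
      · -- last old row
        have hieq : i = t.rows - 1 := by omega
        subst hieq
        cases hx : (gOf G t).ext[j]? with
        | none =>
          rw [ext_nxt_last_other G iN t l hm1
            (by intro x hx'; rw [hx] at hx'; exact absurd hx' (by simp))] at hp
          have := hI.inside _ j p hp
          omega
        | some x =>
          by_cases hmem : x ∈ alOf G t l
          · rw [ext_nxt_last_ext G iN t l hm1 hx hmem] at hp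
            injection hp with hp; subst hp; simp
          · rw [ext_nxt_last_other G iN t l hm1
              (by intro x' hx'; rw [hx] at hx'; injection hx' with hx'; subst hx';
                  exact hmem)] at hp
            have := hI.inside _ j p hp
            omega
    · -- new row
      by_cases hj : j < (alOf G t l).length
      · by_cases hmem : (alOf G t l).getD j 0 ∈ (gOf G t).ext
        · rw [ext_nxt_new_ext G iN t l hj hmem] at hp
          have := hI.inside _ _ p hp
          omega
        · rw [ext_nxt_new_int G iN t l hj hmem] at hp
          injection hp with hp; subst hp; omega
      · rw [ext_nxt_new_none G iN t l hj] at hp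
        exact absurd hp (by simp)
    · rw [ext_nxt_high G iN t l hi (hI.none_high i j (by omega))] at hp
      exact absurd hp (by simp)
  -- down_up
  · intro i j i' j' hp hlt
    rcases Nat.lt_trichotomy i t.rows with hi | rfl | hi
    · rcases Nat.lt_or_ge i (t.rows - 1) with hi1 | hi1
      · -- rows strictly above the old last row
        cases hab : t.nxt i j with
        | none => rw [ext_nxt_old_none G iN t l hi1 hab] at hp; exact absurd hp (by simp)
        | some ab =>
          obtain ⟨a, b⟩ := ab
          by_cases ha : a = t.rows - 1
          · subst ha
            cases hx : (gOf G t).ext[b]? with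
            | none =>
              have hcond : ∀ x, (gOf G t).ext[b]? = some x → x ∉ alOf G t l := by
                intro x hx'; rw [hx] at hx'; exact absurd hx' (by simp)
              rw [ext_nxt_old_keep' G iN t l hi1 hab hcond] at hp
              injection hp with hp
              rw [Prod.mk.injEq] at hp
              obtain ⟨rfl, rfl⟩ := hp
              obtain ⟨c, d, hcd, hc⟩ := hI.down_up i j _ _ hab hlt
              exact ⟨c, d, by rw [ext_nxt_last_other G iN t l hm1 hcond, hcd], hc⟩
            | some x =>
              by_cases hmem : x ∈ alOf G t l
              · rw [ext_nxt_old_redir G iN t l hi1 hab hx hmem] at hp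
                injection hp with hp
                rw [Prod.mk.injEq] at hp
                obtain ⟨rfl, rfl⟩ := hp
                have hblt : b < (gOf G t).ext.length := (List.getElem?_eq_some_iff.mp hx).1
                obtain ⟨a2, b2, hab2, ha2⟩ := hlast_pt b hblt
                exact ⟨a2, b2, by rw [hnew_of_ext hx hmem, hab2], by omega⟩
              · have hcond : ∀ x', (gOf G t).ext[b]? = some x' → x' ∉ alOf G t l := by
                  intro x' hx'; rw [hx] at hx'; injection hx' with hx'; subst hx'; exact hmem
                rw [ext_nxt_old_keep' G iN t l hi1 hab hcond] at hp
                injection hp with hp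
                rw [Prod.mk.injEq] at hp
                obtain ⟨rfl, rfl⟩ := hp
                obtain ⟨c, d, hcd, hc⟩ := hI.down_up i j _ _ hab hlt
                exact ⟨c, d, by rw [ext_nxt_last_other G iN t l hm1 hcond, hcd], hc⟩
          · rw [ext_nxt_old_keep G iN t l hi1 hab ha] at hp
            injection hp with hp
            rw [Prod.mk.injEq] at hp
            obtain ⟨rfl, rfl⟩ := hp
            have hilt : a < t.rows := hI.inside i j _ hab
            obtain ⟨c, d, hcd, hc⟩ := hI.down_up i j _ _ hab hlt
            have hcne : c ≠ t.rows - 1 := by omega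
            exact ⟨c, d, by rw [ext_nxt_old_keep G iN t l (by omega) hcd hcne], hc⟩
      · -- the old last row
        have hieq : i = t.rows - 1 := by omega
        subst hieq
        cases hx : (gOf G t).ext[j]? with
        | none =>
          rw [ext_nxt_last_other G iN t l hm1
            (by intro x hx'; rw [hx] at hx'; exact absurd hx' (by simp))] at hp
          have := hI.inside _ j _ hp
          omega
        | some x =>
          by_cases hmem : x ∈ alOf G t l
          · rw [ext_nxt_last_ext G iN t l hm1 hx hmem] at hp
            injection hp with hp
            rw [Prod.mk.injEq] at hp
            obtain ⟨rfl, rfl⟩ := hp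
            have hjlt : j < (gOf G t).ext.length := (List.getElem?_eq_some_iff.mp hx).1
            obtain ⟨a2, b2, hab2, ha2⟩ := hlast_pt j hjlt
            exact ⟨a2, b2, by rw [hnew_of_ext hx hmem, hab2], by omega⟩
          · rw [ext_nxt_last_other G iN t l hm1
              (by intro x' hx'; rw [hx] at hx'; injection hx' with hx'; subst hx';
                  exact hmem)] at hp
            have := hI.inside _ j _ hp
            omega
    · -- the new row: all its pointers are upwards
      exfalso
      by_cases hj : j < (alOf G t l).length
      · by_cases hmem : (alOf G t l).getD j 0 ∈ (gOf G t).ext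
        · rw [ext_nxt_new_ext G iN t l hj hmem] at hp
          have := hI.inside _ _ _ hp
          omega
        · rw [ext_nxt_new_int G iN t l hj hmem] at hp
          injection hp with hp
          rw [Prod.mk.injEq] at hp
          omega
      · rw [ext_nxt_new_none G iN t l hj] at hp
        exact absurd hp (by simp)
    · rw [ext_nxt_high G iN t l hi (hI.none_high i j (by omega))] at hp
      exact absurd hp (by simp)
  -- last_some
  · intro j hj
    rw [hlastg, ← hal_len] at hj
    rw [hrowsE, Nat.add_sub_cancel]
    by_cases hmem : (alOf G t l).getD j 0 ∈ (gOf G t).ext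
    · have hidxlt : List.idxOf ((alOf G t l).getD j 0) (gOf G t).ext
          < (gOf G t).ext.length := List.idxOf_lt_length_iff.mpr hmem
      obtain ⟨a, b, hab, hsh⟩ := hI.last_some _ hidxlt
      refine ⟨a, b, ?_, ?_⟩
      · rw [ext_nxt_new_ext G iN t l hj hmem, hab]
      · left; omega
    · exact ⟨t.rows - 1, j, ext_nxt_new_int G iN t l hj hmem, Or.inl (by omega)⟩
  -- last_none
  · intro j hj
    rw [hlastg, ← hal_len] at hj
    rw [hrowsE, Nat.add_sub_cancel]
    exact ext_nxt_new_none G iN t l (by omega)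
  -- last_graph
  · rw [hlastg]
    exact hgc
  -- find_correct
  · intro i hi gi hgi j y hy v z hrel
    rw [hrowsE] at hi
    rcases Nat.lt_or_ge i t.rows with hio | hin
    · -- old rows
      have htake : (u ++ [l]).take i = u.take i :=
        List.take_append_of_le_length (by omega)
      rw [htake] at hgi hrel
      obtain ⟨j1, hfv, hvtx⟩ := hI.find_correct i hio gi hgi j y hy v z hrel
      have hymem : y ∈ gi.ext := by
        obtain ⟨h1, rfl⟩ := List.getElem?_eq_some_iff.mp hy
        exact List.getElem_mem h1
      have hLlen : v.length < i := by
        have h := internalRel_ext_lt hrel hgi hymem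
        rwa [List.length_take, min_eq_left (by omega)] at h
      have hLlt : v.length < t.rows - 1 := by omega
      refine ⟨j1, ?_, by rw [ext_vtx_old G iN t l hLlt]; exact hvtx⟩
      cases hab : t.nxt i j with
      | none => rw [Tableau.findVertex, hab] at hfv; exact absurd hfv (by simp)
      | some ab =>
        obtain ⟨a, b⟩ := ab
        rcases le_or_gt a i with hup | hdown
        · -- upwards first pointer
          have heq := fv_up t hab hup
          rw [heq] at hfv
          injection hfv with hfv
          rw [Prod.mk.injEq] at hfv
          obtain ⟨rfl, rfl⟩ := hfv
          rcases Nat.lt_or_ge i (t.rows - 1) with hi1 | hi1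
          · have h1 := ext_nxt_old_keep G iN t l hi1 hab (by omega)
            exact fv_up _ h1 hup
          · have hieq : i = t.rows - 1 := by omega
            subst hieq
            -- here gi is the graph of the old last row
            have htk2 : u.take (t.rows - 1) = u := by
              have h2 : t.rows - 1 = u.length := by omega
              rw [h2, List.take_length]
            rw [htk2, hgu'] at hgi
            injection hgi with hgi
            subst hgi
            by_cases hmem : y ∈ alOf G t l
            · have h1 := ext_nxt_last_ext G iN t l hm1 hy hmem
              rw [fv_down _ h1 (by omega), hnew_of_ext hy hmem, hab]
            · have h1 := ext_nxt_last_other G iN t l hm1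
                (by intro x' hx'; rw [hy] at hx'; injection hx' with hx'; subst hx';
                    exact hmem)
              have h2 : (extendTab G iN t l).nxt (t.rows - 1) j = some (v.length, b) := by
                rw [h1, hab]
              exact fv_up _ h2 hup
        · -- downwards first pointer
          have heq := fv_down t hab hdown
          rw [heq] at hfv
          have halt : a < t.rows := hI.inside i j _ hab
          have hi1 : i < t.rows - 1 := by omega
          by_cases ha : a = t.rows - 1
          · subst ha
            cases hxb : (gOf G t).ext[b]? with
            | none =>
              have hcond : ∀ x', (gOf G t).ext[b]? = some x' → x' ∉ alOf G t l := by
                intro x' hx'; rw [hxb] at hx'; exact absurd hx' (by simp)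
              have h1 := ext_nxt_old_keep' G iN t l hi1 hab hcond
              rw [fv_down _ h1 (by omega), ext_nxt_last_other G iN t l hm1 hcond]
              exact hfv
            | some x =>
              by_cases hmem : x ∈ alOf G t l
              · have h1 := ext_nxt_old_redir G iN t l hi1 hab hxb hmem
                rw [fv_down _ h1 (by omega), hnew_of_ext hxb hmem]
                exact hfv
              · have hcond : ∀ x', (gOf G t).ext[b]? = some x' → x' ∉ alOf G t l := by
                  intro x' hx'; rw [hxb] at hx'; injection hx' with hx'; subst hx';
                    exact hmem
                have h1 := ext_nxt_old_keep' G iN t l hi1 hab hcond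
                rw [fv_down _ h1 (by omega), ext_nxt_last_other G iN t l hm1 hcond]
                exact hfv
          · have h1 := ext_nxt_old_keep G iN t l hi1 hab ha
            rw [fv_down _ h1 hdown]
            have ha1 : a < t.rows - 1 := by omega
            have h2 := ext_nxt_old_keep G iN t l ha1 hfv (by omega)
            exact h2
    · -- the new row
      have hieq : i = t.rows := by omega
      subst hieq
      have htake : (u ++ [l]).take t.rows = u ++ [l] := by
        have h2 : t.rows = (u ++ [l]).length := by simp [hm]
        rw [h2, List.take_length]
      rw [htake] at hgi hrel
      rw [hgc] at hgi
      injection hgi with hgi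
      subst hgi
      obtain ⟨x, hxj, hrec⟩ := internalRel_concat_inv hrel hgu' hE hgc hndB hy
      have hxal : (alOf G t l)[j]? = some x := by rw [hale]; exact hxj
      have hjal : j < (alOf G t l).length := (List.getElem?_eq_some_iff.mp hxal).1
      have hgetDj : (alOf G t l).getD j 0 = x := by
        rw [List.getD_eq_getElem?_getD, hxal]
        rfl
      by_cases hxe : x ∈ (gOf G t).ext
      · -- external in the parent: follow the parent's pointer
        have hjx : List.idxOf x (gOf G t).ext < (gOf G t).ext.length :=
          List.idxOf_lt_length_iff.mpr hxe
        have hxq : (gOf G t).ext[List.idxOf x (gOf G t).ext]? = some x := by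
          rw [List.getElem?_eq_getElem hjx, List.getElem_idxOf hjx]
        have hgu'' : graphAt G (G.graphOf root) (u.take (t.rows - 1)) = some (gOf G t) := by
          have h2 : t.rows - 1 = u.length := by omega
          rw [h2, List.take_length]
          exact hgu'
        have htk3 : u.take (t.rows - 1) = u := by
          have h2 : t.rows - 1 = u.length := by omega
          rw [h2, List.take_length]
        obtain ⟨j1, hfv, hvtx⟩ := hI.find_correct (t.rows - 1) (by omega) _ hgu''
          (List.idxOf x (gOf G t).ext) x hxq v z (by rw [htk3]; exact hrec)
        have hLlt : v.length < t.rows - 1 := by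
          have h := internalRel_ext_lt hrec hgu' hxe
          omega
        obtain ⟨a, b, hab, hsh⟩ := hI.last_some (List.idxOf x (gOf G t).ext) hjx
        have heq := fv_up t hab (by omega)
        rw [heq] at hfv
        injection hfv with hfv
        rw [Prod.mk.injEq] at hfv
        obtain ⟨ha, hb⟩ := hfv
        refine ⟨j1, ?_, by rw [ext_vtx_old G iN t l hLlt]; exact hvtx⟩
        have h1 := ext_nxt_new_ext G iN t l hjal (by rw [hgetDj]; exact hxe)
        rw [hgetDj] at h1
        have h2 : (extendTab G iN t l).nxt t.rows j = some (v.length, j1) := by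
          rw [h1, hab, ← ha, ← hb]
        exact fv_up _ h2 (by omega)
      · -- internal in the parent: new pointer to the parent cell
        obtain ⟨hveq, hzeq⟩ := internalRel_int_inv hrec hgu' hxe
        subst hzeq
        have hulen : v.length = t.rows - 1 := by rw [hveq]; omega
        refine ⟨j, ?_, ?_⟩
        · have h1 := ext_nxt_new_int G iN t l hjal (by rw [hgetDj]; exact hxe)
          rw [fv_up _ h1 (by omega), hulen]
        · rw [hulen, ext_vtx_last_int G iN t l hm1 hjal (by rw [hgetDj]; exact hxe), hgetDj]

lemma inv_fold (hWF : G.WF) (iN : ν → ℕ) (κ : ℕ) (root : Option ν) :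
    ∀ u : List ℕ, (ntSeq G (G.graphOf root) u).isSome = true →
      Inv G root u (createTableau G iN κ root u) := by
  intro u
  induction u using List.reverseRecOn with
  | nil => intro _; exact inv_init hWF root κ
  | append_singleton u l ih =>
    intro hv
    obtain ⟨Bs, hBs⟩ := Option.isSome_iff_exists.mp hv
    obtain ⟨Bs', hBs'⟩ := (step_facts hBs).1
    have hIu := ih (by rw [hBs']; rfl)
    have hfold : createTableau G iN κ root (u ++ [l])
        = extendTab G iN (createTableau G iN κ root u) l := by
      simp [createTableau, List.foldl_append]
    rw [hfold]
    exact inv_step hWF iN hBs hIu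

end StmtAux

end Aux

section Statements

open HRHypergraph HRG

theorem stmt17 {σ ν : Type} [LinearOrder ν] (G : HRG σ ν) (hWF : G.WF) (hSL : G.SL)
    (val : ν → HRHypergraph (σ ⊕ ν)) (hval : G.ValFamily val)
    (κ : ℕ) (hκ : ∀ B : ν, G.rankN B ≤ κ)
    (root : Option ν) (u : List ℕ)
    (hvalid : (ntSeq G (G.graphOf root) u).isSome = true) :
    (∀ i j i' j' : ℕ,
      (createTableau G (iNodes val) κ root u).nxt i j = some (i', j') → i < i' →
      ∀ p ∈ (createTableau G (iNodes val) κ root u).nxt i' j', p.1 ≤ i') ∧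
    (∀ i : ℕ, i < (createTableau G (iNodes val) κ root u).rows →
      ∀ gi, graphAt G (G.graphOf root) (u.take i) = some gi →
      ∀ (j y : ℕ), gi.ext[j]? = some y →
      ∀ (v : List ℕ) (z : ℕ), InternalRel G (G.graphOf root) (u.take i) y v z →
        ∃ j' : ℕ,
          (createTableau G (iNodes val) κ root u).findVertex i j = some (v.length, j') ∧
          (createTableau G (iNodes val) κ root u).vtx v.length j' = z) := by
  have hI := StmtAux.inv_fold hWF (iNodes val) κ root u hvalid
  constructor
  · intro i j i' j' hp hlt p hmem
    obtain ⟨a, b, hab, hle⟩ := hI.down_up i j i' j' hp hlt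
    rw [hab] at hmem
    simp only [Option.mem_def, Option.some_inj] at hmem
    subst hmem
    exact hle
  · intro i hi gi hgi j y hy v z hrel
    exact hI.find_correct i hi gi hgi j y hy v z hrel

end Statements
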